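/- Let M be an episodic tabular MDP with deterministic transitions (for each h, s, a there is f_h(s,a) ∈ S with P_h(f_h(s,a)|s,a) = 1) and a deterministic expert policy π^E (with π^E_h(·|s) a point mass at e_h(s)). Let the dataset D consist of m ≥ 1 i.i.d. expert trajectories (equivalently, determined by m i.i.d. initial states drawn from ρ, since thereafter actions are e_h(s_h) and next states f_h(s_h, a_h)), and let π^{BC}(D) be the behavioral cloning policy. Then V^{π^E} − E_D[V^{π^{BC}(D)}] ≤ |S|·H/(e·m), where e is Euler's number. -/

import Mathlib

open Finset

/-- State distribution `d^π_h` of a policy `π` in an episodic tabular MDP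
(time steps are 0-indexed: `stateDist ρ P π 0 = ρ`). -/
noncomputable def stateDist {S A : Type*} [Fintype S] [Fintype A] (ρ : S → ℝ)
    (P : ℕ → S → A → S → ℝ) (π : ℕ → S → A → ℝ) : ℕ → S → ℝ
  | 0 => ρ
  | h + 1 => fun s' => ∑ s : S, ∑ a : A, stateDist ρ P π h s * π h s a * P h s a s'

/-- State-action distribution `P^π_h(s,a) = d^π_h(s) π_h(a|s)`. -/
noncomputable def saDist {S A : Type*} [Fintype S] [Fintype A] (ρ : S → ℝ)
    (P : ℕ → S → A → S → ℝ) (π : ℕ → S → A → ℝ) (h : ℕ) (s : S) (a : A) : ℝ :=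
  stateDist ρ P π h s * π h s a

/-- Policy value `V^π = Σ_{h<H} Σ_{(s,a)} P^π_h(s,a) r_h(s,a)`. -/
noncomputable def policyValue {S A : Type*} [Fintype S] [Fintype A] (ρ : S → ℝ)
    (P : ℕ → S → A → S → ℝ) (π : ℕ → S → A → ℝ) (r : ℕ → S → A → ℝ) (H : ℕ) : ℝ :=
  ∑ h ∈ Finset.range H, ∑ s : S, ∑ a : A, saDist ρ P π h s a * r h s a

/-- `π` is a (Markovian, non-stationary) policy. -/
def IsPolicy {S A : Type*} [Fintype A] (π : ℕ → S → A → ℝ) : Prop :=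
  ∀ h s, (∀ a, 0 ≤ π h s a) ∧ (∑ a : A, π h s a) = 1

/-- `P` is a transition function. -/
def IsTransition {S A : Type*} [Fintype S] (P : ℕ → S → A → S → ℝ) : Prop :=
  ∀ h s a, (∀ s', 0 ≤ P h s a s') ∧ (∑ s' : S, P h s a s') = 1

/-- `ρ` is an initial state distribution. -/
def IsInitDist {S : Type*} [Fintype S] (ρ : S → ℝ) : Prop :=
  (∀ s, 0 ≤ ρ s) ∧ (∑ s : S, ρ s) = 1

/-- Rewards take values in `[0,1]`. -/
def IsReward {S A : Type*} (r : ℕ → S → A → ℝ) : Prop :=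
  ∀ h s a, 0 ≤ r h s a ∧ r h s a ≤ 1

/-- The VAIL state-action distribution matching objective
`L(π) = Σ_{h<H} Σ_{(s,a)} |P^π_h(s,a) − Q_h(s,a)|`. -/
noncomputable def vailLoss {S A : Type*} [Fintype S] [Fintype A] (ρ : S → ℝ)
    (P : ℕ → S → A → S → ℝ) (π : ℕ → S → A → ℝ) (Q : ℕ → S → A → ℝ) (H : ℕ) : ℝ :=
  ∑ h ∈ Finset.range H, ∑ s : S, ∑ a : A, |saDist ρ P π h s a - Q h s a|

/-- The state reached at time `h` (0-indexed) when starting from `s` and following the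
deterministic expert (`e` = expert action map, `f` = deterministic transition map). -/
def expState {S A : Type*} (f : ℕ → S → A → S) (e : ℕ → S → A) : ℕ → S → S
  | 0, s => s
  | h + 1, s => f h (expState f e h s) (e h (expState f e h s))

open Classical in
/-- The behavioral cloning policy computed from the dataset of expert trajectories started
at the initial states `x i` (the dataset is determined by the initial states, since the
expert and the transitions are deterministic): it copies the expert action on visited
states and is uniform on non-visited states. -/
noncomputable def bcPolicy {S A : Type*} [Fintype A] {m : ℕ}
    (f : ℕ → S → A → S) (e : ℕ → S → A) (x : Fin m → S) : ℕ → S → A → ℝ :=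
  fun h s a =>
    if ∃ i : Fin m, expState f e h (x i) = s then (if a = e h s then 1 else 0)
    else (1 : ℝ) / (Fintype.card A : ℝ)

section Aux

variable {S A : Type*} [Fintype S] [Fintype A] [DecidableEq S] [DecidableEq A]

/-- Point mass at `s₀`. -/
noncomputable def deltaDist (s₀ : S) : S → ℝ := fun s => if s = s₀ then 1 else 0

lemma deltaDist_isInit (s₀ : S) : IsInitDist (deltaDist s₀) := by
  constructor
  · intro s; unfold deltaDist; positivity
  · simp [deltaDist]

lemma stateDist_lin (ρ : S → ℝ) (P : ℕ → S → A → S → ℝ) (π : ℕ → S → A → ℝ) :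
    ∀ h s, stateDist ρ P π h s = ∑ s₀ : S, ρ s₀ * stateDist (deltaDist s₀) P π h s := by
  intro h
  induction h with
  | zero =>
    intro s
    simp [stateDist, deltaDist, mul_ite, Finset.sum_ite_eq, eq_comm]
  | succ h ih =>
    intro s'
    show (∑ s : S, ∑ a : A, stateDist ρ P π h s * π h s a * P h s a s')
        = ∑ s₀ : S, ρ s₀ * ∑ s : S, ∑ a : A,
            stateDist (deltaDist s₀) P π h s * π h s a * P h s a s'
    calc (∑ s : S, ∑ a : A, stateDist ρ P π h s * π h s a * P h s a s')
        = ∑ s : S, ∑ s₀ : S, ∑ a : A,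
            ρ s₀ * (stateDist (deltaDist s₀) P π h s * π h s a * P h s a s') := by
          refine Finset.sum_congr rfl fun s _ => ?_
          rw [Finset.sum_comm]
          refine Finset.sum_congr rfl fun a _ => ?_
          rw [ih s, Finset.sum_mul, Finset.sum_mul]
          exact Finset.sum_congr rfl fun s₀ _ => by ring
      _ = ∑ s₀ : S, ρ s₀ * ∑ s : S, ∑ a : A,
            stateDist (deltaDist s₀) P π h s * π h s a * P h s a s' := by
          rw [Finset.sum_comm]
          refine Finset.sum_congr rfl fun s₀ _ => ?_
          simp [Finset.mul_sum]

lemma stateDist_props (ρ : S → ℝ) (P : ℕ → S → A → S → ℝ) (π : ℕ → S → A → ℝ)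
    (hρ : IsInitDist ρ) (hP : IsTransition P) (hπ : IsPolicy π) :
    ∀ h, (∀ s, 0 ≤ stateDist ρ P π h s) ∧ (∑ s : S, stateDist ρ P π h s) = 1 := by
  intro h
  induction h with
  | zero => exact hρ
  | succ h ih =>
    constructor
    · intro s'
      show 0 ≤ ∑ s : S, ∑ a : A, stateDist ρ P π h s * π h s a * P h s a s'
      refine Finset.sum_nonneg fun s _ => Finset.sum_nonneg fun a _ => ?_
      exact mul_nonneg (mul_nonneg (ih.1 s) ((hπ h s).1 a)) ((hP h s a).1 s')
    · show (∑ s' : S, ∑ s : S, ∑ a : A, stateDist ρ P π h s * π h s a * P h s a s') = 1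
      rw [Finset.sum_comm]
      calc (∑ s : S, ∑ s' : S, ∑ a : A, stateDist ρ P π h s * π h s a * P h s a s')
          = ∑ s : S, stateDist ρ P π h s := by
            refine Finset.sum_congr rfl fun s _ => ?_
            rw [Finset.sum_comm]
            calc (∑ a : A, ∑ s' : S, stateDist ρ P π h s * π h s a * P h s a s')
                = ∑ a : A, stateDist ρ P π h s * π h s a := by
                  refine Finset.sum_congr rfl fun a _ => ?_
                  rw [← Finset.mul_sum, (hP h s a).2, mul_one]
              _ = stateDist ρ P π h s := by rw [← Finset.mul_sum, (hπ h s).2, mul_one]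
        _ = 1 := ih.2

/-- A policy that plays the expert actions along the expert path from `s₀`
has the expert's (deterministic) state distribution. -/
lemma stateDist_path (P : ℕ → S → A → S → ℝ) (π : ℕ → S → A → ℝ)
    (f : ℕ → S → A → S) (hf : ∀ h s a s', P h s a s' = if s' = f h s a then (1 : ℝ) else 0)
    (e : ℕ → S → A) (s₀ : S)
    (hπ : ∀ h a, π h (expState f e h s₀) a
        = if a = e h (expState f e h s₀) then (1 : ℝ) else 0) :
    ∀ h s, stateDist (deltaDist s₀) P π h s = deltaDist (expState f e h s₀) s := by
  intro h
  induction h with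
  | zero => intro s; rfl
  | succ h ih =>
    intro s'
    show (∑ s : S, ∑ a : A, stateDist (deltaDist s₀) P π h s * π h s a * P h s a s')
        = deltaDist (expState f e (h+1) s₀) s'
    rw [Finset.sum_eq_single (expState f e h s₀)]
    · calc (∑ a : A, stateDist (deltaDist s₀) P π h (expState f e h s₀)
              * π h (expState f e h s₀) a * P h (expState f e h s₀) a s')
          = ∑ a : A, (if a = e h (expState f e h s₀) then (1:ℝ) else 0)
              * P h (expState f e h s₀) a s' := by
            refine Finset.sum_congr rfl fun a _ => ?_
            rw [ih, hπ]
            simp [deltaDist]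
        _ = ∑ a : A, (if a = e h (expState f e h s₀)
              then P h (expState f e h s₀) a s' else 0) := by
            refine Finset.sum_congr rfl fun a _ => ?_
            split_ifs <;> simp
        _ = P h (expState f e h s₀) (e h (expState f e h s₀)) s' := by
            rw [Finset.sum_ite_eq']; simp
        _ = deltaDist (expState f e (h+1) s₀) s' := by
            rw [hf]; rfl
    · intro s _ hs
      rw [ih]
      simp [deltaDist, hs]
    · simp

/-- Value of a policy that plays the expert actions along the expert path from `s₀`. -/
lemma policyValue_path (P : ℕ → S → A → S → ℝ) (π : ℕ → S → A → ℝ) (r : ℕ → S → A → ℝ)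
    (H : ℕ)
    (f : ℕ → S → A → S) (hf : ∀ h s a s', P h s a s' = if s' = f h s a then (1 : ℝ) else 0)
    (e : ℕ → S → A) (s₀ : S)
    (hπ : ∀ h a, π h (expState f e h s₀) a
        = if a = e h (expState f e h s₀) then (1 : ℝ) else 0) :
    policyValue (deltaDist s₀) P π r H
      = ∑ h ∈ Finset.range H, r h (expState f e h s₀) (e h (expState f e h s₀)) := by
  unfold policyValue
  refine Finset.sum_congr rfl fun h _ => ?_
  calc (∑ s : S, ∑ a : A, saDist (deltaDist s₀) P π h s a * r h s a)
      = ∑ s : S, (if s = expState f e h s₀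
          then ∑ a : A, π h s a * r h s a else 0) := by
        refine Finset.sum_congr rfl fun s _ => ?_
        unfold saDist
        rw [stateDist_path P π f hf e s₀ hπ]
        unfold deltaDist
        split_ifs
        · simp
        · simp
    _ = ∑ a : A, π h (expState f e h s₀) a * r h (expState f e h s₀) a := by
        rw [Finset.sum_ite_eq']; simp
    _ = ∑ a : A, (if a = e h (expState f e h s₀)
          then r h (expState f e h s₀) a else 0) := by
        refine Finset.sum_congr rfl fun a _ => ?_
        rw [hπ]; split_ifs <;> simp
    _ = r h (expState f e h s₀) (e h (expState f e h s₀)) := by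
        rw [Finset.sum_ite_eq']; simp

lemma policyValue_lin (ρ : S → ℝ) (P : ℕ → S → A → S → ℝ) (π : ℕ → S → A → ℝ)
    (r : ℕ → S → A → ℝ) (H : ℕ) :
    policyValue ρ P π r H = ∑ s₀ : S, ρ s₀ * policyValue (deltaDist s₀) P π r H := by
  unfold policyValue
  simp only [Finset.mul_sum]
  conv_rhs => rw [Finset.sum_comm]
  refine Finset.sum_congr rfl fun h _ => ?_
  calc (∑ s : S, ∑ a : A, saDist ρ P π h s a * r h s a)
      = ∑ s : S, ∑ s₀ : S, ∑ a : A,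
          ρ s₀ * (saDist (deltaDist s₀) P π h s a * r h s a) := by
        refine Finset.sum_congr rfl fun s _ => ?_
        rw [Finset.sum_comm]
        refine Finset.sum_congr rfl fun a _ => ?_
        unfold saDist
        rw [stateDist_lin ρ P π h s, Finset.sum_mul, Finset.sum_mul]
        exact Finset.sum_congr rfl fun s₀ _ => by ring
    _ = ∑ s₀ : S, ∑ s : S, ∑ a : A,
          ρ s₀ * (saDist (deltaDist s₀) P π h s a * r h s a) := Finset.sum_comm

lemma policyValue_nonneg (ρ : S → ℝ) (P : ℕ → S → A → S → ℝ) (π : ℕ → S → A → ℝ)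
    (r : ℕ → S → A → ℝ) (H : ℕ)
    (hρ : IsInitDist ρ) (hP : IsTransition P) (hπ : IsPolicy π) (hr : IsReward r) :
    0 ≤ policyValue ρ P π r H := by
  refine Finset.sum_nonneg fun h _ => Finset.sum_nonneg fun s _ =>
    Finset.sum_nonneg fun a _ => mul_nonneg (mul_nonneg ?_ ((hπ h s).1 a)) (hr h s a).1
  exact (stateDist_props ρ P π hρ hP hπ h).1 s

lemma policyValue_le (ρ : S → ℝ) (P : ℕ → S → A → S → ℝ) (π : ℕ → S → A → ℝ)
    (r : ℕ → S → A → ℝ) (H : ℕ)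
    (hρ : IsInitDist ρ) (hP : IsTransition P) (hπ : IsPolicy π) (hr : IsReward r) :
    policyValue ρ P π r H ≤ H := by
  calc policyValue ρ P π r H
      ≤ ∑ h ∈ Finset.range H, (1 : ℝ) := by
        refine Finset.sum_le_sum fun h _ => ?_
        calc (∑ s : S, ∑ a : A, saDist ρ P π h s a * r h s a)
            ≤ ∑ s : S, ∑ a : A, saDist ρ P π h s a := by
              refine Finset.sum_le_sum fun s _ => Finset.sum_le_sum fun a _ => ?_
              have hnn : 0 ≤ saDist ρ P π h s a :=
                mul_nonneg ((stateDist_props ρ P π hρ hP hπ h).1 s) ((hπ h s).1 a)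
              nlinarith [(hr h s a).1, (hr h s a).2]
          _ = 1 := by
              calc (∑ s : S, ∑ a : A, saDist ρ P π h s a)
                  = ∑ s : S, stateDist ρ P π h s := by
                    refine Finset.sum_congr rfl fun s _ => ?_
                    unfold saDist
                    rw [← Finset.mul_sum, (hπ h s).2, mul_one]
                _ = 1 := (stateDist_props ρ P π hρ hP hπ h).2
    _ = H := by simp

lemma bcPolicy_isPolicy [Nonempty A] {m : ℕ} (f : ℕ → S → A → S) (e : ℕ → S → A)
    (x : Fin m → S) : IsPolicy (bcPolicy f e x) := by
  intro h s
  constructor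
  · intro a
    unfold bcPolicy
    split_ifs <;> positivity
  · unfold bcPolicy
    split_ifs with hv
    · rw [Finset.sum_eq_single (e h s)]
      · simp
      · intro b _ hb; simp [hb]
      · simp
    · rw [Finset.sum_const]
      have : (0:ℝ) < (Fintype.card A : ℝ) := by
        exact_mod_cast Fintype.card_pos
      rw [Finset.card_univ, nsmul_eq_mul]
      field_simp

lemma te_le (t : ℝ) (ht : 0 ≤ t) : t * Real.exp (-t) ≤ Real.exp (-1) := by
  have h1 : t ≤ Real.exp (t - 1) := by
    have := Real.add_one_le_exp (t - 1)
    linarith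
  calc t * Real.exp (-t) ≤ Real.exp (t - 1) * Real.exp (-t) := by
        exact mul_le_mul_of_nonneg_right h1 (Real.exp_nonneg _)
    _ = Real.exp (-1) := by rw [← Real.exp_add]; ring_nf

lemma key_ineq (p : ℝ) (hp0 : 0 ≤ p) (hp1 : p ≤ 1) (m : ℕ) (hm : 1 ≤ m) :
    p * (1 - p) ^ m ≤ 1 / (Real.exp 1 * m) := by
  have hm0 : (0:ℝ) < m := by exact_mod_cast hm
  have h1 : (1 - p) ^ m ≤ Real.exp (-(p * m)) := by
    have hb : 1 - p ≤ Real.exp (-p) := by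
      have := Real.add_one_le_exp (-p)
      linarith
    calc (1 - p) ^ m ≤ Real.exp (-p) ^ m :=
          pow_le_pow_left₀ (by linarith) hb m
      _ = Real.exp (↑m * (-p)) := (Real.exp_nat_mul _ m).symm
      _ = Real.exp (-(p * m)) := by ring_nf
  have h2 : p * Real.exp (-(p * m)) ≤ 1 / (Real.exp 1 * m) := by
    calc p * Real.exp (-(p * ↑m)) = (p * ↑m * Real.exp (-(p * ↑m))) / ↑m := by
          field_simp
      _ ≤ Real.exp (-1) / ↑m := by
          gcongr
          exact te_le _ (by positivity)
      _ = 1 / (Real.exp 1 * m) := by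
          rw [Real.exp_neg, one_div, mul_inv, div_eq_mul_inv]
  calc p * (1 - p) ^ m ≤ p * Real.exp (-(p * m)) :=
        mul_le_mul_of_nonneg_left h1 hp0
    _ ≤ 1 / (Real.exp 1 * m) := h2

lemma sum_prod_pow (g : S → ℝ) (m : ℕ) :
    ∑ x : Fin m → S, ∏ i : Fin m, g (x i) = (∑ s : S, g s) ^ m := by
  calc ∑ x : Fin m → S, ∏ i : Fin m, g (x i)
      = ∑ x ∈ Fintype.piFinset (fun _ : Fin m => (Finset.univ : Finset S)),
          ∏ i : Fin m, g (x i) := by rw [Fintype.piFinset_univ]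
    _ = ∏ _i : Fin m, ∑ s : S, g s := (Finset.prod_univ_sum _ _).symm
    _ = (∑ s : S, g s) ^ m := by rw [Finset.prod_const, Finset.card_univ, Fintype.card_fin]

lemma unvisited_prob (ρ : S → ℝ) (hρ : IsInitDist ρ) (m : ℕ) (s₀ : S) :
    ∑ x : Fin m → S, (∏ i : Fin m, ρ (x i)) * (if ∃ i, x i = s₀ then (0:ℝ) else 1)
      = (1 - ρ s₀) ^ m := by
  have hterm : ∀ x : Fin m → S, (∏ i : Fin m, ρ (x i)) * (if ∃ i, x i = s₀ then (0:ℝ) else 1)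
      = ∏ i : Fin m, (if x i = s₀ then 0 else ρ (x i)) := by
    intro x
    by_cases hv : ∃ i, x i = s₀
    · obtain ⟨i, hi⟩ := hv
      rw [if_pos ⟨i, hi⟩, mul_zero]
      exact (Finset.prod_eq_zero (Finset.mem_univ i) (by rw [if_pos hi])).symm
    · rw [if_neg hv, mul_one]
      exact Finset.prod_congr rfl fun i _ => by rw [if_neg fun h => hv ⟨i, h⟩]
  simp only [hterm]
  rw [sum_prod_pow (fun s => if s = s₀ then (0:ℝ) else ρ s) m]
  congr 1
  have hsplit : ∀ s : S, (if s = s₀ then (0:ℝ) else ρ s)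
      = ρ s - (if s = s₀ then ρ s else 0) := by
    intro s; split_ifs <;> ring
  simp only [hsplit]
  rw [Finset.sum_sub_distrib, hρ.2, Finset.sum_ite_eq']
  simp

end Aux
/-- for any episodic tabular MDP with deterministic transitions and a
deterministic expert policy, with a dataset of `m ≥ 1` i.i.d. expert trajectories
(determined by `m` i.i.d. initial states drawn from `ρ`), behavioral cloning satisfies
`V^{πE} − E_D[V^{πBC(D)}] ≤ |S| H / (e m)`. -/
theorem bc_deterministic_expected_gap {S A : Type*} [Fintype S] [Fintype A]
    [Nonempty S] [Nonempty A] [DecidableEq S] [DecidableEq A]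
    (ρ : S → ℝ) (P : ℕ → S → A → S → ℝ) (r : ℕ → S → A → ℝ) (πE : ℕ → S → A → ℝ)
    (H : ℕ) (hH : 1 ≤ H)
    (hρ : IsInitDist ρ) (hP : IsTransition P) (hr : IsReward r) (hE : IsPolicy πE)
    (f : ℕ → S → A → S) (hf : ∀ h s a s', P h s a s' = if s' = f h s a then (1 : ℝ) else 0)
    (e : ℕ → S → A) (he : ∀ h s a, πE h s a = if a = e h s then (1 : ℝ) else 0)
    (m : ℕ) (hm : 1 ≤ m) :
    policyValue ρ P πE r H
        - ∑ x : Fin m → S, (∏ i : Fin m, ρ (x i)) * policyValue ρ P (bcPolicy f e x) r H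
      ≤ (Fintype.card S : ℝ) * H / (Real.exp 1 * m) := by
  obtain ⟨hρ0, hρ1⟩ := hρ
  have hw0 : ∀ x : Fin m → S, 0 ≤ ∏ i : Fin m, ρ (x i) :=
    fun x => Finset.prod_nonneg fun i _ => hρ0 (x i)
  have hwsum : ∑ x : Fin m → S, ∏ i : Fin m, ρ (x i) = 1 := by
    rw [sum_prod_pow, hρ1, one_pow]
  have hgap : ∀ x : Fin m → S,
      policyValue ρ P πE r H - policyValue ρ P (bcPolicy f e x) r H
        ≤ ∑ s₀ : S, ρ s₀ * ((H : ℝ) * (if ∃ i, x i = s₀ then (0:ℝ) else 1)) := by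
    intro x
    rw [policyValue_lin ρ P πE r H, policyValue_lin ρ P (bcPolicy f e x) r H,
        ← Finset.sum_sub_distrib]
    refine Finset.sum_le_sum fun s₀ _ => ?_
    by_cases hvis : ∃ i, x i = s₀
    · have hVE := policyValue_path P πE r H f hf e s₀ (fun h a => he h _ a)
      have hVB : policyValue (deltaDist s₀) P (bcPolicy f e x) r H
          = ∑ h ∈ Finset.range H, r h (expState f e h s₀) (e h (expState f e h s₀)) := by
        refine policyValue_path P _ r H f hf e s₀ ?_
        intro h a
        unfold bcPolicy
        obtain ⟨i, hi⟩ := hvis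
        rw [if_pos ⟨i, by rw [hi]⟩]
        by_cases hae : a = e h (expState f e h s₀)
        · rw [if_pos hae, if_pos hae]
        · rw [if_neg hae, if_neg hae]
      rw [hVE, hVB, if_pos hvis]
      simp
    · have h1 : policyValue (deltaDist s₀) P πE r H ≤ H :=
        policyValue_le _ _ _ _ _ (deltaDist_isInit s₀) hP hE hr
      have h2 : 0 ≤ policyValue (deltaDist s₀) P (bcPolicy f e x) r H :=
        policyValue_nonneg _ _ _ _ _ (deltaDist_isInit s₀) hP (bcPolicy_isPolicy f e x) hr
      have h3 := hρ0 s₀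
      rw [if_neg hvis]
      nlinarith
  calc policyValue ρ P πE r H
        - ∑ x : Fin m → S, (∏ i : Fin m, ρ (x i)) * policyValue ρ P (bcPolicy f e x) r H
      = ∑ x : Fin m → S, (∏ i : Fin m, ρ (x i))
          * (policyValue ρ P πE r H - policyValue ρ P (bcPolicy f e x) r H) := by
        simp only [mul_sub, Finset.sum_sub_distrib, ← Finset.sum_mul, hwsum, one_mul]
    _ ≤ ∑ x : Fin m → S, (∏ i : Fin m, ρ (x i))
          * ∑ s₀ : S, ρ s₀ * ((H : ℝ) * (if ∃ i, x i = s₀ then (0:ℝ) else 1)) :=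
        Finset.sum_le_sum fun x _ => mul_le_mul_of_nonneg_left (hgap x) (hw0 x)
    _ = ∑ s₀ : S, (H : ℝ) * ρ s₀ *
          ∑ x : Fin m → S, (∏ i : Fin m, ρ (x i)) * (if ∃ i, x i = s₀ then (0:ℝ) else 1) := by
        simp only [Finset.mul_sum]
        rw [Finset.sum_comm]
        exact Finset.sum_congr rfl fun s₀ _ => Finset.sum_congr rfl fun x _ => by ring
    _ = ∑ s₀ : S, (H : ℝ) * (ρ s₀ * (1 - ρ s₀) ^ m) := by
        refine Finset.sum_congr rfl fun s₀ _ => ?_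
        rw [unvisited_prob ρ ⟨hρ0, hρ1⟩ m s₀, mul_assoc]
    _ ≤ ∑ s₀ : S, (H : ℝ) * (1 / (Real.exp 1 * m)) := by
        refine Finset.sum_le_sum fun s₀ _ => ?_
        refine mul_le_mul_of_nonneg_left ?_ (by positivity)
        refine key_ineq (ρ s₀) (hρ0 s₀) ?_ m hm
        calc ρ s₀ ≤ ∑ s : S, ρ s := Finset.single_le_sum (fun s _ => hρ0 s) (Finset.mem_univ s₀)
          _ = 1 := hρ1
    _ = (Fintype.card S : ℝ) * H / (Real.exp 1 * m) := by
        rw [Finset.sum_const, Finset.card_univ, nsmul_eq_mul]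
        ring
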